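/- arXiv:2412.20575 — 7 statements merged into one kernel-verified Lean document; each statement's English description precedes it below -/
import Mathlib

section
/- Let u : [0,T] → ℝ^n be continuously differentiable and A a positive semidefinite symmetric n×n real matrix, with u'(t) + A u(t) = f(t) for all t ∈ [0,T]. Then for every t ∈ [0,T]: ⟨u(t), A u(t)⟩ + ∫_0^t (‖u'(s)‖² + ‖A u(s)‖²) ds = ⟨u(0), A u(0)⟩ + ∫_0^t ‖f(s)‖² ds. -/
open Matrix MeasureTheory

/-- Continuous maximal `L²` regularity identity in `ℝ^n`: if `u' + A u = f` on `[0,T]`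
with `A` symmetric positive semidefinite, then for every `t ∈ [0,T]`,
`⟨u t, A u t⟩ + ∫₀ᵗ (‖u'‖² + ‖Au‖²) = ⟨u 0, A u 0⟩ + ∫₀ᵗ ‖f‖²`. -/
theorem continuous_maximal_regularity (n : ℕ) (T : ℝ) (hT : 0 < T)
    (A : Matrix (Fin n) (Fin n) ℝ) (hA : A.PosSemidef)
    (u u' f : ℝ → (Fin n → ℝ))
    (hderiv : ∀ t ∈ Set.Icc (0 : ℝ) T, HasDerivAt u (u' t) t)
    (hcont : ContinuousOn u' (Set.Icc (0 : ℝ) T))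
    (hf : ContinuousOn f (Set.Icc (0 : ℝ) T))
    (heq : ∀ t ∈ Set.Icc (0 : ℝ) T, u' t + A.mulVec (u t) = f t)
    (t : ℝ) (ht : t ∈ Set.Icc (0 : ℝ) T) :
    u t ⬝ᵥ A.mulVec (u t)
        + ∫ s in (0 : ℝ)..t, ((∑ i, (u' s i) ^ 2) + ∑ i, (A.mulVec (u s) i) ^ 2)
      = u 0 ⬝ᵥ A.mulVec (u 0) + ∫ s in (0 : ℝ)..t, ∑ i, (f s i) ^ 2 := by
  obtain ⟨ht0, htT⟩ := ht
  have hsub : Set.uIcc (0:ℝ) t ⊆ Set.Icc 0 T := by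
    rw [Set.uIcc_of_le ht0]; exact Set.Icc_subset_Icc le_rfl htT
  have hsym : ∀ x y : Fin n → ℝ, x ⬝ᵥ A.mulVec y = y ⬝ᵥ A.mulVec x := by
    intro x y
    rw [Matrix.dotProduct_mulVec, ← Matrix.mulVec_transpose]
    have : Aᵀ = A := by
      have := hA.1; rwa [Matrix.IsHermitian, Matrix.conjTranspose_eq_transpose_of_trivial] at this
    rw [this, dotProduct_comm]
  -- derivative of coordinates
  have hcoord : ∀ s ∈ Set.Icc (0:ℝ) T, ∀ i, HasDerivAt (fun s => u s i) (u' s i) s := by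
    intro s hs i
    exact ((ContinuousLinearMap.proj i : (Fin n → ℝ) →L[ℝ] ℝ).hasFDerivAt.comp_hasDerivAt s
      (hderiv s hs))
  have hgderiv : ∀ s ∈ Set.Icc (0:ℝ) T,
      HasDerivAt (fun s => u s ⬝ᵥ A.mulVec (u s)) (2 * (u' s ⬝ᵥ A.mulVec (u s))) s := by
    intro s hs
    have h1 : HasDerivAt (fun s => u s ⬝ᵥ A.mulVec (u s))
        (u' s ⬝ᵥ A.mulVec (u s) + u s ⬝ᵥ A.mulVec (u' s)) s := by
      have : ∀ i, HasDerivAt (fun s => u s i * A.mulVec (u s) i)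
          (u' s i * A.mulVec (u s) i + u s i * A.mulVec (u' s) i) s := by
        intro i
        have hAui : HasDerivAt (fun s => A.mulVec (u s) i) (A.mulVec (u' s) i) s := by
          have : ∀ s, A.mulVec (u s) i = ∑ j, A i j * u s j := by
            intro s; simp [Matrix.mulVec, dotProduct]
          simp only [this]
          have : A.mulVec (u' s) i = ∑ j, A i j * u' s j := by
            simp [Matrix.mulVec, dotProduct]
          rw [this]
          exact HasDerivAt.fun_sum (fun j _ => (hcoord s hs j).const_mul (A i j))
        exact (hcoord s hs i).mul hAui
      have hsum := HasDerivAt.fun_sum (fun i (_ : i ∈ Finset.univ) => this i)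
      simpa [dotProduct, Finset.sum_add_distrib] using hsum
    have : u' s ⬝ᵥ A.mulVec (u s) + u s ⬝ᵥ A.mulVec (u' s) = 2 * (u' s ⬝ᵥ A.mulVec (u s)) := by
      rw [hsym (u s) (u' s)]; ring
    rwa [this] at h1
  have hucont : ContinuousOn u (Set.Icc 0 T) := fun s hs =>
    (hderiv s hs).continuousAt.continuousWithinAt
  have hAcont : Continuous (fun v : Fin n → ℝ => A.mulVec v) :=
    (A.mulVecLin : (Fin n → ℝ) →ₗ[ℝ] (Fin n → ℝ)).continuous_of_finiteDimensional
  have hAucont : ContinuousOn (fun s => A.mulVec (u s)) (Set.Icc 0 T) :=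
    hAcont.comp_continuousOn hucont
  have hg'cont : ContinuousOn (fun s => 2 * (u' s ⬝ᵥ A.mulVec (u s))) (Set.Icc 0 T) := by
    apply ContinuousOn.mul continuousOn_const
    simp only [dotProduct]
    exact continuousOn_finset_sum _ fun i _ =>
      ((continuous_apply i).comp_continuousOn hcont).mul ((continuous_apply i).comp_continuousOn hAucont)
  have hFTC : ∫ s in (0:ℝ)..t, 2 * (u' s ⬝ᵥ A.mulVec (u s))
      = u t ⬝ᵥ A.mulVec (u t) - u 0 ⬝ᵥ A.mulVec (u 0) := by
    apply intervalIntegral.integral_eq_sub_of_hasDerivAt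
    · exact fun s hs => hgderiv s (hsub hs)
    · exact (hg'cont.mono hsub).intervalIntegrable
  have hpt : ∀ s ∈ Set.Icc (0:ℝ) T,
      (∑ i, (f s i) ^ 2)
        = ((∑ i, (u' s i) ^ 2) + ∑ i, (A.mulVec (u s) i) ^ 2)
          + 2 * (u' s ⬝ᵥ A.mulVec (u s)) := by
    intro s hs
    rw [← heq s hs]
    simp only [Pi.add_apply, dotProduct, Finset.mul_sum]
    rw [← Finset.sum_add_distrib, ← Finset.sum_add_distrib]
    exact Finset.sum_congr rfl fun i _ => by ring
  have hint1 : IntervalIntegrable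
      (fun s => (∑ i, (u' s i) ^ 2) + ∑ i, (A.mulVec (u s) i) ^ 2) volume 0 t := by
    apply ContinuousOn.intervalIntegrable
    apply ContinuousOn.mono _ hsub
    apply ContinuousOn.add
    · exact continuousOn_finset_sum _ fun i _ => ((continuous_apply i).comp_continuousOn hcont).pow 2
    · exact continuousOn_finset_sum _ fun i _ => ((continuous_apply i).comp_continuousOn hAucont).pow 2
  have hint2 : IntervalIntegrable (fun s => 2 * (u' s ⬝ᵥ A.mulVec (u s))) volume 0 t :=
    (hg'cont.mono hsub).intervalIntegrable
  have hsplit : ∫ s in (0:ℝ)..t, ∑ i, (f s i) ^ 2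
      = (∫ s in (0:ℝ)..t, ((∑ i, (u' s i) ^ 2) + ∑ i, (A.mulVec (u s) i) ^ 2))
        + ∫ s in (0:ℝ)..t, 2 * (u' s ⬝ᵥ A.mulVec (u s)) := by
    rw [← intervalIntegral.integral_add hint1 hint2]
    apply intervalIntegral.integral_congr
    intro s hs
    exact hpt s (hsub hs)
  rw [hsplit, hFTC]
  ring
end

section
/- Let A be a symmetric positive semidefinite n×n real matrix and k > 0. If vectors U_0, ..., U_m in ℝ^n and data f_0, ..., f_m satisfy the trapezoidal rule (U_{n+1} - U_n)/k + A(U_{n+1} + U_n)/2 = (f_{n+1} + f_n)/2 for n = 0, ..., m-1, then ⟨U_m, A U_m⟩ + ∑_{n=0}^{m-1} k ‖(U_{n+1} - U_n)/k‖² + ∑_{n=0}^{m-1} k ‖A(U_{n+1} + U_n)/2‖² = ⟨U_0, A U_0⟩ + ∑_{n=0}^{m-1} k ‖(f_{n+1} + f_n)/2‖². -/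
open Matrix

lemma sum_sq_eq_dot {n : ℕ} (v : Fin n → ℝ) : ∑ i, v i ^ 2 = v ⬝ᵥ v := by
  simp [dotProduct, sq]

lemma symm_cross {n : ℕ} (A : Matrix (Fin n) (Fin n) ℝ) (hA : A.IsSymm)
    (x y : Fin n → ℝ) : y ⬝ᵥ A.mulVec x = x ⬝ᵥ A.mulVec y := by
  rw [dotProduct_mulVec, ← mulVec_transpose, hA, dotProduct_comm]

lemma sub_dot_add {n : ℕ} (A : Matrix (Fin n) (Fin n) ℝ) (hA : A.IsSymm)
    (x y : Fin n → ℝ) :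
    (x - y) ⬝ᵥ A.mulVec (x + y) = x ⬝ᵥ A.mulVec x - y ⬝ᵥ A.mulVec y := by
  rw [sub_dotProduct, mulVec_add, dotProduct_add, dotProduct_add,
    symm_cross A hA x y]
  ring

/-- Discrete maximal `L²` regularity identity for the trapezoidal (Crank–Nicolson) method
with constant step `k` in `ℝ^n`, for a symmetric positive semidefinite matrix `A`. -/
theorem trapezoidal_maximal_regularity (n m : ℕ)
    (A : Matrix (Fin n) (Fin n) ℝ) (hA : A.PosSemidef)
    (k : ℝ) (hk : 0 < k) (U f : ℕ → (Fin n → ℝ))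
    (heq : ∀ j < m,
      k⁻¹ • (U (j + 1) - U j) + (2⁻¹ : ℝ) • A.mulVec (U (j + 1) + U j)
        = (2⁻¹ : ℝ) • (f (j + 1) + f j)) :
    U m ⬝ᵥ A.mulVec (U m)
        + ∑ j ∈ Finset.range m, k * ∑ i, (k⁻¹ • (U (j + 1) - U j)) i ^ 2
        + ∑ j ∈ Finset.range m, k * ∑ i, ((2⁻¹ : ℝ) • A.mulVec (U (j + 1) + U j)) i ^ 2
      = U 0 ⬝ᵥ A.mulVec (U 0)
        + ∑ j ∈ Finset.range m, k * ∑ i, ((2⁻¹ : ℝ) • (f (j + 1) + f j)) i ^ 2 := by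
  induction m with
  | zero => simp
  | succ m ih =>
    have ih' := ih (fun j hj => heq j (Nat.lt_succ_of_lt hj))
    have hstep := heq m (Nat.lt_succ_self m)
    set D := k⁻¹ • (U (m + 1) - U m) with hD
    set B := (2⁻¹ : ℝ) • A.mulVec (U (m + 1) + U m) with hB
    have hg : ∑ i, ((2⁻¹ : ℝ) • (f (m + 1) + f m)) i ^ 2
        = ∑ i, D i ^ 2 + ∑ i, B i ^ 2 + 2 * (D ⬝ᵥ B) := by
      rw [sum_sq_eq_dot, sum_sq_eq_dot, sum_sq_eq_dot, ← hstep]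
      rw [add_dotProduct, dotProduct_add, dotProduct_add, dotProduct_comm B D]
      ring
    have hDB : 2 * k * (D ⬝ᵥ B)
        = U (m + 1) ⬝ᵥ A.mulVec (U (m + 1)) - U m ⬝ᵥ A.mulVec (U m) := by
      rw [hD, hB, smul_dotProduct, dotProduct_smul, smul_eq_mul, smul_eq_mul,
        sub_dot_add A hA.1 (U (m + 1)) (U m)]
      field_simp
    have hk2 : k * (∑ i, D i ^ 2 + ∑ i, B i ^ 2 + 2 * (D ⬝ᵥ B))
        = k * ∑ i, D i ^ 2 + k * ∑ i, B i ^ 2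
          + (U (m + 1) ⬝ᵥ A.mulVec (U (m + 1)) - U m ⬝ᵥ A.mulVec (U m)) := by
      rw [← hDB]; ring
    simp only [Finset.sum_range_succ, ← hD, ← hB]
    rw [hg, hk2]
    linarith [ih']
end

section
/- Let A be a symmetric positive semidefinite n×n matrix, U_0, ..., U_m ∈ ℝ^n, k_0, ..., k_{m-1} > 0 (variable time steps), and suppose (U_{n+1} - U_n)/k_n + A(U_{n+1} + U_n)/2 = g_n for each n. Then ⟨U_m, A U_m⟩ + ∑_{n=0}^{m-1} k_n (‖(U_{n+1}-U_n)/k_n‖² + ‖A(U_{n+1}+U_n)/2‖²) = ⟨U_0, A U_0⟩ + ∑_{n=0}^{m-1} k_n ‖g_n‖². -/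
open Matrix

private lemma symm_dot {n : ℕ} {A : Matrix (Fin n) (Fin n) ℝ} (hA : A.PosSemidef)
    (v w : Fin n → ℝ) : v ⬝ᵥ A.mulVec w = w ⬝ᵥ A.mulVec v := by
  have hAt : Aᵀ = A := by
    have := hA.1
    simpa [Matrix.IsHermitian, Matrix.conjTranspose_eq_transpose_of_trivial] using this
  rw [Matrix.dotProduct_mulVec, ← Matrix.mulVec_transpose, hAt, dotProduct_comm]

private lemma step_eq {n : ℕ} {A : Matrix (Fin n) (Fin n) ℝ} (hA : A.PosSemidef)
    {kk : ℝ} (hkk : 0 < kk) (u u' : Fin n → ℝ) :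
    kk * ∑ i, (kk⁻¹ • (u' - u) + (2⁻¹ : ℝ) • A.mulVec (u' + u)) i ^ 2
      = kk * ((∑ i, (kk⁻¹ • (u' - u)) i ^ 2)
          + ∑ i, ((2⁻¹ : ℝ) • A.mulVec (u' + u)) i ^ 2)
        + (u' ⬝ᵥ A.mulVec u' - u ⬝ᵥ A.mulVec u) := by
  set D : Fin n → ℝ := kk⁻¹ • (u' - u) with hD
  set S : Fin n → ℝ := (2⁻¹ : ℝ) • A.mulVec (u' + u) with hS
  have hsum : ∑ i, (D + S) i ^ 2 = (∑ i, D i ^ 2) + (∑ i, S i ^ 2) + 2 * (D ⬝ᵥ S) := by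
    simp only [Pi.add_apply, dotProduct, Finset.mul_sum, ← Finset.sum_add_distrib]
    apply Finset.sum_congr rfl
    intro i _
    ring
  have hDS : kk * (2 * (D ⬝ᵥ S)) = u' ⬝ᵥ A.mulVec u' - u ⬝ᵥ A.mulVec u := by
    have h1 : D ⬝ᵥ S = kk⁻¹ * 2⁻¹ * ((u' - u) ⬝ᵥ A.mulVec (u' + u)) := by
      rw [hD, hS, smul_dotProduct, dotProduct_smul, smul_eq_mul, smul_eq_mul]
      ring
    have h2 : (u' - u) ⬝ᵥ A.mulVec (u' + u)
        = u' ⬝ᵥ A.mulVec u' - u ⬝ᵥ A.mulVec u := by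
      have hx : u ⬝ᵥ A.mulVec u' = u' ⬝ᵥ A.mulVec u := symm_dot hA u u'
      rw [sub_dotProduct, Matrix.mulVec_add, dotProduct_add,
        dotProduct_add]
      rw [hx]
      ring
    rw [h1, h2]
    field_simp
  calc kk * ∑ i, (D + S) i ^ 2
      = kk * ((∑ i, D i ^ 2) + (∑ i, S i ^ 2)) + kk * (2 * (D ⬝ᵥ S)) := by
        rw [hsum]; ring
    _ = _ := by rw [hDS]

/-- Variable-step discrete maximal regularity equality for the trapezoidal scheme in `ℝ^n`
with a symmetric positive semidefinite matrix `A` and arbitrary data `g j` on step `j`. -/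
theorem trapezoidal_maximal_regularity_variable_steps (n m : ℕ)
    (A : Matrix (Fin n) (Fin n) ℝ) (hA : A.PosSemidef)
    (k : ℕ → ℝ) (hk : ∀ j < m, 0 < k j) (U g : ℕ → (Fin n → ℝ))
    (heq : ∀ j < m,
      (k j)⁻¹ • (U (j + 1) - U j) + (2⁻¹ : ℝ) • A.mulVec (U (j + 1) + U j) = g j) :
    U m ⬝ᵥ A.mulVec (U m)
        + ∑ j ∈ Finset.range m, k j *
            ((∑ i, ((k j)⁻¹ • (U (j + 1) - U j)) i ^ 2)
              + ∑ i, ((2⁻¹ : ℝ) • A.mulVec (U (j + 1) + U j)) i ^ 2)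
      = U 0 ⬝ᵥ A.mulVec (U 0)
        + ∑ j ∈ Finset.range m, k j * ∑ i, (g j i) ^ 2 := by
  induction m with
  | zero => simp
  | succ m ih =>
    have hk' : ∀ j < m, 0 < k j := fun j hj => hk j (Nat.lt_succ_of_lt hj)
    have heq' : ∀ j < m, (k j)⁻¹ • (U (j + 1) - U j)
        + (2⁻¹ : ℝ) • A.mulVec (U (j + 1) + U j) = g j :=
      fun j hj => heq j (Nat.lt_succ_of_lt hj)
    have ihm := ih hk' heq'
    rw [Finset.sum_range_succ, Finset.sum_range_succ]
    have hg : ∑ i, (g m i) ^ 2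
        = ∑ i, ((k m)⁻¹ • (U (m + 1) - U m) + (2⁻¹ : ℝ) • A.mulVec (U (m + 1) + U m)) i ^ 2 := by
      rw [heq m (Nat.lt_succ_self m)]
    have hstep := step_eq hA (hk m (Nat.lt_succ_self m)) (U m) (U (m + 1))
    rw [hg, hstep]
    linarith [ihm]
end

section
/- Let A be a symmetric positive semidefinite n×n matrix, let (a_{ij}), (b_i) be the coefficients of an algebraically stable q-stage Runge–Kutta method, and let k > 0. Suppose U_{n}, U_{n+1}, and stage values U_{n,1}, ..., U_{n,q} ∈ ℝ^n satisfy U_{ni} = U_n − k ∑_j a_{ij}(A U_{nj} − f_{nj}) and U_{n+1} = U_n − k ∑_i b_i (A U_{ni} − f_{ni}) for given f_{ni} ∈ ℝ^n. Then ⟨U_{n+1}, A U_{n+1}⟩ + k ∑_i b_i ‖A U_{ni} − f_{ni}‖² + k ∑_i b_i ‖A U_{ni}‖² ≤ ⟨U_n, A U_n⟩ + k ∑_i b_i ‖f_{ni}‖². -/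
open Matrix

private lemma aux_mulVec_sum {n q : ℕ} (A : Matrix (Fin n) (Fin n) ℝ)
    (w : Fin q → Fin n → ℝ) : A.mulVec (∑ i, w i) = ∑ i, A.mulVec (w i) := by
  ext c
  simp only [mulVec, dotProduct, Finset.sum_apply, Finset.mul_sum]
  exact Finset.sum_comm

private lemma aux_dot_sum {n q : ℕ} (u : Fin n → ℝ) (w : Fin q → Fin n → ℝ) :
    u ⬝ᵥ (∑ i, w i) = ∑ i, u ⬝ᵥ w i := by
  simp only [dotProduct, Finset.sum_apply, Finset.mul_sum]
  exact Finset.sum_comm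

private lemma aux_sum_dot {n q : ℕ} (u : Fin n → ℝ) (w : Fin q → Fin n → ℝ) :
    (∑ i, w i) ⬝ᵥ u = ∑ i, w i ⬝ᵥ u := by
  rw [dotProduct_comm, aux_dot_sum]
  exact Finset.sum_congr rfl fun i _ => dotProduct_comm _ _

private lemma aux_sym {n : ℕ} {A : Matrix (Fin n) (Fin n) ℝ} (hA : A.PosSemidef)
    (u v : Fin n → ℝ) : u ⬝ᵥ A.mulVec v = v ⬝ᵥ A.mulVec u := by
  rw [dotProduct_mulVec, ← mulVec_transpose, show Aᵀ = A from hA.1, dotProduct_comm]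

/-- For a real PSD matrix `M` and any family of vectors `w`, the quadratic form
`∑ᵢⱼ Mᵢⱼ ⟨wᵢ, wⱼ⟩` is nonnegative. -/
private lemma aux_psd_sum {n q : ℕ} (M : Matrix (Fin q) (Fin q) ℝ) (hM : M.PosSemidef)
    (w : Fin q → Fin n → ℝ) :
    0 ≤ ∑ i, ∑ j, M i j * (w i ⬝ᵥ w j) := by
  have hc : ∀ c, (fun i => w i c) ⬝ᵥ M.mulVec (fun j => w j c)
      = ∑ i, ∑ j, M i j * (w i c * w j c) := by
    intro c
    simp only [dotProduct, mulVec, Finset.mul_sum]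
    refine Finset.sum_congr rfl fun i _ => Finset.sum_congr rfl fun j _ => by ring
  have key : ∑ i, ∑ j, M i j * (w i ⬝ᵥ w j)
      = ∑ c, (fun i => w i c) ⬝ᵥ M.mulVec (fun j => w j c) := by
    calc ∑ i, ∑ j, M i j * (w i ⬝ᵥ w j)
        = ∑ i, ∑ j, ∑ c, M i j * (w i c * w j c) := by
          refine Finset.sum_congr rfl fun i _ => Finset.sum_congr rfl fun j _ => ?_
          rw [dotProduct, Finset.mul_sum]
      _ = ∑ i, ∑ c, ∑ j, M i j * (w i c * w j c) :=
          Finset.sum_congr rfl fun i _ => Finset.sum_comm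
      _ = ∑ c, ∑ i, ∑ j, M i j * (w i c * w j c) := Finset.sum_comm
      _ = ∑ c, (fun i => w i c) ⬝ᵥ M.mulVec (fun j => w j c) :=
          Finset.sum_congr rfl fun c _ => (hc c).symm
  rw [key]
  refine Finset.sum_nonneg fun c _ => ?_
  simpa using hM.dotProduct_mulVec_nonneg (fun i => w i c)

/-- One-step maximal regularity estimate for an algebraically stable `q`-stage
Runge–Kutta method applied to `U' + AU = f` in `ℝ^n`, with `A` symmetric positive
semidefinite. -/
theorem rk_one_step_maximal_regularity (n q : ℕ)
    (A : Matrix (Fin n) (Fin n) ℝ) (hA : A.PosSemidef)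
    (a : Fin q → Fin q → ℝ) (b : Fin q → ℝ) (hb : ∀ i, 0 ≤ b i)
    (hM : (Matrix.of fun i j => b i * a i j + b j * a j i - b i * b j).PosSemidef)
    (k : ℝ) (hk : 0 < k) (Un Unext : Fin n → ℝ) (Ust f : Fin q → (Fin n → ℝ))
    (hstage : ∀ i, Ust i = Un - k • ∑ j, a i j • (A.mulVec (Ust j) - f j))
    (hstep : Unext = Un - k • ∑ i, b i • (A.mulVec (Ust i) - f i)) :
    Unext ⬝ᵥ A.mulVec Unext
        + k * ∑ i, b i * ∑ j, (A.mulVec (Ust i) - f i) j ^ 2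
        + k * ∑ i, b i * ∑ j, (A.mulVec (Ust i) j) ^ 2
      ≤ Un ⬝ᵥ A.mulVec Un + k * ∑ i, b i * ∑ j, (f i j) ^ 2 := by
  set g : Fin q → Fin n → ℝ := fun i => A.mulVec (Ust i) - f i with hg
  -- basic expansion of a dot product against a linear combination
  have hdotcomb : ∀ (u : Fin n → ℝ) (c : Fin q → ℝ),
      u ⬝ᵥ A.mulVec (∑ i, c i • g i) = ∑ i, c i * (u ⬝ᵥ A.mulVec (g i)) := by
    intro u c
    rw [show A.mulVec (∑ i, c i • g i) = ∑ i, c i • A.mulVec (g i) by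
        rw [aux_mulVec_sum]; exact Finset.sum_congr rfl fun i _ => mulVec_smul .., aux_dot_sum]
    exact Finset.sum_congr rfl fun i _ => by rw [dotProduct_smul]; simp [smul_eq_mul]
  -- G i j = ⟨g i, A g j⟩
  set G : Fin q → Fin q → ℝ := fun i j => g i ⬝ᵥ A.mulVec (g j) with hGdef
  have hGsym : ∀ i j, G i j = G j i := fun i j => aux_sym hA _ _
  set P : Fin q → ℝ := fun i => Un ⬝ᵥ A.mulVec (g i) with hP
  set v : Fin n → ℝ := ∑ i, b i • g i with hv
  have hstep' : Unext = Un - k • v := hstep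
  have hstage' : ∀ i, Ust i = Un - k • ∑ j, a i j • g j := hstage
  have hv1 : Un ⬝ᵥ A.mulVec v = ∑ i, b i * P i := hdotcomb Un b
  have hv2 : v ⬝ᵥ A.mulVec v = ∑ i, ∑ j, b i * b j * G i j := by
    rw [hv, aux_sum_dot]
    refine Finset.sum_congr rfl fun i _ => ?_
    rw [smul_dotProduct, smul_eq_mul, hdotcomb (g i) b, Finset.mul_sum]
    exact Finset.sum_congr rfl fun j _ => by ring
  -- Expansion of the new step
  have E1 : Unext ⬝ᵥ A.mulVec Unext
      = Un ⬝ᵥ A.mulVec Un - 2 * k * ∑ i, b i * P i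
        + k ^ 2 * ∑ i, ∑ j, b i * b j * G i j := by
    rw [hstep', sub_dotProduct, mulVec_sub, dotProduct_sub, dotProduct_sub, mulVec_smul]
    simp only [smul_dotProduct, dotProduct_smul, smul_eq_mul]
    rw [aux_sym hA v Un, hv1, hv2]
    ring
  -- stage relation
  have E4 : ∀ i, g i ⬝ᵥ A.mulVec (Ust i) = P i - k * ∑ j, a i j * G i j := by
    intro i
    calc g i ⬝ᵥ A.mulVec (Ust i)
        = g i ⬝ᵥ A.mulVec (Un - k • ∑ j, a i j • g j) := by
          conv_lhs => rw [hstage' i]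
      _ = P i - k * ∑ j, a i j * G i j := by
          rw [mulVec_sub, dotProduct_sub, mulVec_smul, dotProduct_smul, smul_eq_mul,
            hdotcomb (g i) (a i), aux_sym hA (g i) Un]
  -- polarization
  have E5 : ∀ i, 2 * (g i ⬝ᵥ A.mulVec (Ust i))
      = g i ⬝ᵥ g i + A.mulVec (Ust i) ⬝ᵥ A.mulVec (Ust i) - f i ⬝ᵥ f i := by
    intro i
    have hfg : A.mulVec (Ust i) = g i + f i := by rw [hg]; simp
    rw [hfg]
    simp only [dotProduct_add, add_dotProduct]
    rw [dotProduct_comm (f i) (g i)]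
    ring
  -- positivity from algebraic stability
  have E6 : 0 ≤ ∑ i, ∑ j, (b i * a i j + b j * a j i - b i * b j) * G i j := by
    obtain ⟨B, hB⟩ : ∃ B : Matrix (Fin n) (Fin n) ℝ, A = Bᴴ * B := by
      open scoped MatrixOrder in exact CStarAlgebra.nonneg_iff_eq_star_mul_self.mp hA.nonneg
    have hGB : ∀ i j, G i j = B.mulVec (g i) ⬝ᵥ B.mulVec (g j) := by
      intro i j
      show g i ⬝ᵥ A.mulVec (g j) = _
      rw [hB, ← mulVec_mulVec, dotProduct_mulVec, show Bᴴ = Bᵀ from rfl, vecMul_transpose]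
    have h := aux_psd_sum (Matrix.of fun i j => b i * a i j + b j * a j i - b i * b j) hM
      (fun i => B.mulVec (g i))
    refine le_trans h (le_of_eq ?_)
    refine Finset.sum_congr rfl fun i _ => Finset.sum_congr rfl fun j _ => ?_
    rw [hGB i j]
    rfl
  -- rewrite the squares in the goal as dot products
  have hsq : ∀ x : Fin n → ℝ, ∑ j, x j ^ 2 = x ⬝ᵥ x := by
    intro x; simp [dotProduct, sq]
  -- the summed polarization/stage identity
  have E7 : 2 * ∑ i, b i * P i
      = (∑ i, b i * (g i ⬝ᵥ g i)) + (∑ i, b i * (A.mulVec (Ust i) ⬝ᵥ A.mulVec (Ust i)))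
        - (∑ i, b i * (f i ⬝ᵥ f i)) + 2 * k * ∑ i, ∑ j, b i * a i j * G i j := by
    have h6 : ∀ i, 2 * (b i * P i)
        = b i * (g i ⬝ᵥ g i) + b i * (A.mulVec (Ust i) ⬝ᵥ A.mulVec (Ust i))
          - b i * (f i ⬝ᵥ f i) + 2 * k * ∑ j, b i * a i j * G i j := by
      intro i
      have h5 := E5 i
      have hPi : P i = g i ⬝ᵥ A.mulVec (Ust i) + k * ∑ j, a i j * G i j := by
        rw [E4 i]; ring
      have hT : ∑ j, b i * a i j * G i j = b i * ∑ j, a i j * G i j := by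
        rw [Finset.mul_sum]
        exact Finset.sum_congr rfl fun j _ => by ring
      rw [hPi, hT]
      linear_combination (b i) * h5
    calc 2 * ∑ i, b i * P i = ∑ i, 2 * (b i * P i) := Finset.mul_sum _ _ _
      _ = ∑ i, (b i * (g i ⬝ᵥ g i) + b i * (A.mulVec (Ust i) ⬝ᵥ A.mulVec (Ust i))
            - b i * (f i ⬝ᵥ f i) + 2 * k * ∑ j, b i * a i j * G i j) :=
          Finset.sum_congr rfl fun i _ => h6 i
      _ = _ := by
          rw [Finset.sum_add_distrib, Finset.sum_sub_distrib, Finset.sum_add_distrib,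
            ← Finset.mul_sum]
  -- index-swap identity for the M-sum
  have E8 : ∑ i, ∑ j, (b i * a i j + b j * a j i - b i * b j) * G i j
      = 2 * (∑ i, ∑ j, b i * a i j * G i j) - ∑ i, ∑ j, b i * b j * G i j := by
    have swap : ∑ i, ∑ j, b j * a j i * G i j = ∑ i, ∑ j, b i * a i j * G i j := by
      rw [Finset.sum_comm]
      exact Finset.sum_congr rfl fun i _ => Finset.sum_congr rfl fun j _ => by
        rw [hGsym j i]
    have hrow : ∀ i, ∑ j, (b i * a i j + b j * a j i - b i * b j) * G i j
        = ((∑ j, b i * a i j * G i j) + ∑ j, b j * a j i * G i j) - ∑ j, b i * b j * G i j := by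
      intro i
      rw [← Finset.sum_add_distrib, ← Finset.sum_sub_distrib]
      exact Finset.sum_congr rfl fun j _ => by ring
    calc ∑ i, ∑ j, (b i * a i j + b j * a j i - b i * b j) * G i j
        = ∑ i, (((∑ j, b i * a i j * G i j) + ∑ j, b j * a j i * G i j)
            - ∑ j, b i * b j * G i j) := Finset.sum_congr rfl fun i _ => hrow i
      _ = ((∑ i, ∑ j, b i * a i j * G i j) + ∑ i, ∑ j, b j * a j i * G i j)
            - ∑ i, ∑ j, b i * b j * G i j := by
          rw [Finset.sum_sub_distrib, Finset.sum_add_distrib]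
      _ = _ := by rw [swap]; ring
  -- assemble everything
  have hgoal1 : (∑ i, b i * ∑ j, (A.mulVec (Ust i) - f i) j ^ 2)
      = ∑ i, b i * (g i ⬝ᵥ g i) :=
    Finset.sum_congr rfl fun i _ => by rw [show (∑ j, (A.mulVec (Ust i) - f i) j ^ 2)
      = g i ⬝ᵥ g i from hsq (g i)]
  have hgoal2 : (∑ i, b i * ∑ j, (A.mulVec (Ust i) j) ^ 2)
      = ∑ i, b i * (A.mulVec (Ust i) ⬝ᵥ A.mulVec (Ust i)) :=
    Finset.sum_congr rfl fun i _ => by rw [hsq (A.mulVec (Ust i))]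
  have hgoal3 : (∑ i, b i * ∑ j, (f i j) ^ 2) = ∑ i, b i * (f i ⬝ᵥ f i) :=
    Finset.sum_congr rfl fun i _ => by rw [hsq (f i)]
  rw [hgoal1, hgoal2, hgoal3, E1]
  nlinarith [mul_nonneg (mul_nonneg hk.le hk.le) E6, E7, E8, sq_nonneg k]
end

section
/- (Radau key inequality, polynomial form) Let c_1 < ... < c_q = 1 be the right Radau nodes in (0,1], whose quadrature is exact on polynomials of degree ≤ 2q−2, and let I_{q-1} be interpolation at these nodes. Let A be a symmetric positive semidefinite n×n matrix and W : [0,1] → ℝ^n a polynomial of degree ≤ q. Then ∫_0^1 ⟨W'(τ), A(W(τ) − (I_{q-1}W)(τ))⟩ dτ ≤ 0. -/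
open Polynomial Matrix

/-- Radau key inequality, polynomial form: for the right Radau nodes
`c 0 < ... < c (q-1) = 1` in `(0,1]` whose quadrature is exact on degree `≤ 2q−2`,
a symmetric positive semidefinite matrix `A`, and a vector-valued polynomial `W` of
degree `≤ q` with interpolant `I_{q-1}W` at the nodes,
`∫₀¹ ⟨W'(τ), A (W(τ) − (I_{q-1}W)(τ))⟩ dτ ≤ 0`. -/
theorem radau_key_inequality (q n : ℕ) (hq : 0 < q) (c : Fin q → ℝ)
    (hc : StrictMono c) (hc01 : ∀ i, c i ∈ Set.Ioc (0 : ℝ) 1)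
    (hlast : c ⟨q - 1, by omega⟩ = 1)
    (w : Fin q → ℝ)
    (hw : ∀ i, w i = ∫ τ in (0 : ℝ)..1, (Lagrange.basis Finset.univ c i).eval τ)
    (hExact : ∀ p : Polynomial ℝ, p.natDegree ≤ 2 * q - 2 →
      ∫ τ in (0 : ℝ)..1, p.eval τ = ∑ i, w i * p.eval (c i))
    (A : Matrix (Fin n) (Fin n) ℝ) (hA : A.PosSemidef)
    (W IW : Fin n → Polynomial ℝ)
    (hW : ∀ i, (W i).natDegree ≤ q) (hIW : ∀ i, (IW i).natDegree ≤ q - 1)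
    (hinterp : ∀ i j, (IW i).eval (c j) = (W i).eval (c j)) :
    ∫ τ in (0 : ℝ)..1, ∑ i, (Polynomial.derivative (W i)).eval τ *
        (A.mulVec fun j => (W j).eval τ - (IW j).eval τ) i ≤ 0 := by
  classical
  set E : Fin n → Polynomial ℝ := fun j => W j - IW j with hE
  have hEnode : ∀ j k, (E j).eval (c k) = 0 := by
    intro j k; simp [hE, hinterp j k]
  have hEdeg : ∀ j, (E j).natDegree ≤ q := fun j =>
    le_trans (natDegree_sub_le _ _) (max_le (hW j) (le_trans (hIW j) (by omega)))
  have hE1 : ∀ j, (E j).eval 1 = 0 := fun j => hlast ▸ hEnode j _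
  have hsym : ∀ i j, A i j = A j i := by
    intro i j
    have := hA.1
    rw [Matrix.IsHermitian] at this
    conv_lhs => rw [← this]
    simp [Matrix.conjTranspose_apply]
  set P1 : Polynomial ℝ := ∑ i, ∑ j, C (A i j) * derivative (IW i) * E j with hP1
  set P2 : Polynomial ℝ := ∑ i, ∑ j, C (A i j) * derivative (E i) * E j with hP2
  set Q : Polynomial ℝ := ∑ i, ∑ j, C (A i j) * E i * E j with hQ
  -- pointwise identity
  have hpt : ∀ τ : ℝ, (∑ i, (Polynomial.derivative (W i)).eval τ *
      (A.mulVec fun j => (W j).eval τ - (IW j).eval τ) i) = (P1 + P2).eval τ := by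
    intro τ
    simp only [hP1, hP2, eval_add, eval_finset_sum, Matrix.mulVec, dotProduct,
      ← Finset.sum_add_distrib, Finset.mul_sum]
    refine Finset.sum_congr rfl fun i _ => Finset.sum_congr rfl fun j _ => ?_
    simp only [hE, eval_mul, eval_C, derivative_sub, eval_sub]
    ring
  rw [intervalIntegral.integral_congr (fun τ _ => hpt τ)]
  have hintg : ∀ p : Polynomial ℝ, IntervalIntegrable (fun τ => p.eval τ)
      MeasureTheory.volume (0 : ℝ) 1 := fun p => (p.continuous_aeval).intervalIntegrable _ _
  have hsplit : ∫ τ in (0 : ℝ)..1, (P1 + P2).eval τ =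
      (∫ τ in (0 : ℝ)..1, P1.eval τ) + ∫ τ in (0 : ℝ)..1, P2.eval τ := by
    simp only [eval_add]
    exact intervalIntegral.integral_add (hintg P1) (hintg P2)
  rw [hsplit]
  -- first integral is zero by exactness
  have hP1deg : P1.natDegree ≤ 2 * q - 2 := by
    refine le_trans (natDegree_sum_le _ _) ?_
    rw [Finset.fold_max_le]
    refine ⟨Nat.zero_le _, fun i _ => ?_⟩
    refine le_trans (natDegree_sum_le _ _) ?_
    rw [Finset.fold_max_le]
    refine ⟨Nat.zero_le _, fun j _ => ?_⟩
    by_cases hd : derivative (IW i) = 0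
    · simp [hd]
    · have h1 : 1 ≤ (IW i).natDegree := by
        by_contra h
        push_neg at h
        interval_cases h' : (IW i).natDegree
        · exact hd (by
            have := Polynomial.natDegree_eq_zero.mp h'
            obtain ⟨a, ha⟩ := this
            simp [← ha])
      have hq2 : 2 ≤ q := by have := hIW i; omega
      have hdd : (derivative (IW i)).natDegree ≤ q - 2 := by
        have := Polynomial.natDegree_derivative_le (IW i)
        have := hIW i
        omega
      calc (C (A i j) * derivative (IW i) * E j).natDegree
          ≤ (C (A i j) * derivative (IW i)).natDegree + (E j).natDegree :=
            natDegree_mul_le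
        _ ≤ ((C (A i j)).natDegree + (derivative (IW i)).natDegree) + (E j).natDegree :=
            Nat.add_le_add_right natDegree_mul_le _
        _ ≤ (0 + (q - 2)) + q := by
            exact add_le_add (add_le_add (by simp) hdd) (hEdeg j)
        _ ≤ 2 * q - 2 := by omega
  have hP1zero : ∫ τ in (0 : ℝ)..1, P1.eval τ = 0 := by
    rw [hExact P1 hP1deg]
    refine Finset.sum_eq_zero fun k _ => ?_
    simp [hP1, eval_finset_sum, hEnode]
  rw [hP1zero, zero_add]
  -- second integral via FTC
  have hderivQ : derivative Q = 2 * P2 := by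
    simp only [hQ, derivative_sum, derivative_mul, derivative_C, zero_mul, zero_add]
    have : ∀ i j : Fin n, C (A i j) * derivative (E i) * E j + C (A i j) * E i * derivative (E j)
        = (C (A i j) * derivative (E i) * E j) + (C (A j i) * derivative (E j) * E i) := by
      intro i j; rw [hsym i j]; ring
    calc (∑ i, ∑ j, (C (A i j) * derivative (E i) * E j + C (A i j) * E i * derivative (E j)))
        = (∑ i, ∑ j, C (A i j) * derivative (E i) * E j)
          + ∑ i, ∑ j, C (A j i) * derivative (E j) * E i := by
          simp only [this, Finset.sum_add_distrib]
      _ = P2 + P2 := by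
          refine congrArg₂ (· + ·) rfl ?_
          rw [Finset.sum_comm]
      _ = 2 * P2 := by ring
  have hftc : ∫ τ in (0 : ℝ)..1, (derivative Q).eval τ = Q.eval 1 - Q.eval 0 := by
    exact intervalIntegral.integral_eq_sub_of_hasDerivAt
      (fun x _ => Q.hasDerivAt x) (hintg _)
  have hP2val : ∫ τ in (0 : ℝ)..1, P2.eval τ = (Q.eval 1 - Q.eval 0) / 2 := by
    have h2 : ∫ τ in (0 : ℝ)..1, (derivative Q).eval τ = 2 * ∫ τ in (0 : ℝ)..1, P2.eval τ := by
      rw [hderivQ]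
      simp only [eval_mul, eval_ofNat]
      rw [intervalIntegral.integral_const_mul]
    rw [hftc] at h2
    linarith
  rw [hP2val]
  have hQ1 : Q.eval 1 = 0 := by
    simp [hQ, eval_finset_sum, hE1]
  have hQ0 : 0 ≤ Q.eval 0 := by
    have := hA.dotProduct_mulVec_nonneg (fun j => (E j).eval 0)
    simp only [dotProduct, Matrix.mulVec, RCLike.re_to_real, star] at this
    calc (0:ℝ) ≤ star (fun j => (E j).eval 0) ⬝ᵥ A.mulVec (fun j => (E j).eval 0) := hA.dotProduct_mulVec_nonneg _
      _ = Q.eval 0 := by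
          simp [hQ, dotProduct, Matrix.mulVec, eval_finset_sum, Finset.mul_sum]
          refine Finset.sum_congr rfl fun i _ => Finset.sum_congr rfl fun j _ => ?_
          ring
  rw [hQ1]
  linarith
end

section
/- (Maximal regularity for the continuous Galerkin cG(q) method, finite-dimensional, one step) Let A be a symmetric positive semidefinite n×n matrix, k > 0, and let Û : [0,k] → ℝ^n be a polynomial of degree ≤ q satisfying the pointwise equation Û'(t) + P_{q-1}(A Û)(t) = g(t) on [0,k], where P_{q-1} is the L²(0,k)-orthogonal projection onto polynomials of degree ≤ q−1 (acting componentwise) and g is a polynomial of degree ≤ q−1. Then ⟨Û(k), A Û(k)⟩ + ∫_0^k ‖Û'(t)‖² dt + ∫_0^k ‖P_{q-1}(AÛ)(t)‖² dt = ⟨Û(0), A Û(0)⟩ + ∫_0^k ‖g(t)‖² dt. -/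
open Polynomial Matrix

/-- One-step maximal regularity identity for the continuous Galerkin `cG(q)` method in
`ℝ^n`: if the polynomial `Û` (componentwise `Uh`) of degree `≤ q` satisfies
`Û' + P_{q-1}(A Û) = g` pointwise on `[0,k]`, where `P` is the `L²(0,k)`-projection of
`A Û` onto polynomials of degree `≤ q−1` (characterized by orthogonality) and `g` has
degree `≤ q−1`, then the discrete energy identity holds. -/
theorem cG_one_step_maximal_regularity (n q : ℕ)
    (A : Matrix (Fin n) (Fin n) ℝ) (hA : A.PosSemidef)
    (k : ℝ) (hk : 0 < k) (Uh P g : Fin n → Polynomial ℝ)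
    (hU : ∀ i, (Uh i).natDegree ≤ q) (hP : ∀ i, (P i).natDegree ≤ q - 1)
    (hg : ∀ i, (g i).natDegree ≤ q - 1)
    (hproj : ∀ φ : Polynomial ℝ, φ.natDegree ≤ q - 1 → ∀ i,
      ∫ t in (0 : ℝ)..k,
        φ.eval t * ((A.mulVec fun j => (Uh j).eval t) i - (P i).eval t) = 0)
    (heq : ∀ i, ∀ t ∈ Set.Icc (0 : ℝ) k,
      (Polynomial.derivative (Uh i)).eval t + (P i).eval t = (g i).eval t) :
    (fun i => (Uh i).eval k) ⬝ᵥ A.mulVec (fun i => (Uh i).eval k)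
        + (∫ t in (0 : ℝ)..k, ∑ i, ((Polynomial.derivative (Uh i)).eval t) ^ 2)
        + (∫ t in (0 : ℝ)..k, ∑ i, ((P i).eval t) ^ 2)
      = (fun i => (Uh i).eval 0) ⬝ᵥ A.mulVec (fun i => (Uh i).eval 0)
        + ∫ t in (0 : ℝ)..k, ∑ i, ((g i).eval t) ^ 2 := by
  have hsym : ∀ i j, A i j = A j i := fun i j => by
    have := hA.1.apply i j
    simpa using this.symm
  -- polynomial identity from heq
  have heq' : ∀ i, derivative (Uh i) + P i = g i := by
    intro i
    apply Polynomial.eq_of_infinite_eval_eq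
    apply Set.Infinite.mono _ (Set.Icc_infinite hk)
    intro t ht
    simp only [Set.mem_setOf_eq, eval_add]
    exact heq i t ht
  have hdeg : ∀ i, (derivative (Uh i)).natDegree ≤ q - 1 := fun i =>
    le_trans (Polynomial.natDegree_derivative_le _) (Nat.sub_le_sub_right (hU i) 1)
  -- notation
  set D : Fin n → ℝ → ℝ := fun i t => (derivative (Uh i)).eval t with hD
  set Pf : Fin n → ℝ → ℝ := fun i t => (P i).eval t with hPf
  set AU : Fin n → ℝ → ℝ := fun i t => ∑ j, A i j * (Uh j).eval t with hAU
  have contD : ∀ i, Continuous (D i) := fun i => Polynomial.continuous _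
  have contP : ∀ i, Continuous (Pf i) := fun i => Polynomial.continuous _
  have contAU : ∀ i, Continuous (AU i) := fun i =>
    continuous_finset_sum _ fun j _ => continuous_const.mul (Polynomial.continuous _)
  -- Step B : per-component projection identity
  have stepB : ∀ i, (∫ t in (0:ℝ)..k, D i t * AU i t) = ∫ t in (0:ℝ)..k, D i t * Pf i t := by
    intro i
    have h0 := hproj (derivative (Uh i)) (hdeg i) i
    have hrw : ∀ t : ℝ, (derivative (Uh i)).eval t *
        ((A.mulVec fun j => (Uh j).eval t) i - (P i).eval t)
        = D i t * AU i t - D i t * Pf i t := by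
      intro t
      simp [hD, hPf, hAU, Matrix.mulVec, dotProduct, mul_sub]
    rw [show (fun t => (derivative (Uh i)).eval t *
        ((A.mulVec fun j => (Uh j).eval t) i - (P i).eval t)) = fun t => D i t * AU i t - D i t * Pf i t
      from funext hrw] at h0
    have hint1 : IntervalIntegrable (fun t => D i t * AU i t) MeasureTheory.volume 0 k :=
      ((contD i).mul (contAU i)).intervalIntegrable _ _
    have hint2 : IntervalIntegrable (fun t => D i t * Pf i t) MeasureTheory.volume 0 k :=
      ((contD i).mul (contP i)).intervalIntegrable _ _
    rw [intervalIntegral.integral_sub hint1 hint2] at h0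
    linarith
  -- the energy polynomial
  set Q : Fin n → Polynomial ℝ := fun i => ∑ j, C (A i j) * Uh j with hQ
  set F : Polynomial ℝ := ∑ i, Uh i * Q i with hF
  have hQeval : ∀ i t, (Q i).eval t = AU i t := by
    intro i t; simp [hQ, hAU, eval_finset_sum]
  have hFeval : ∀ t, F.eval t = (fun i => (Uh i).eval t) ⬝ᵥ A.mulVec (fun i => (Uh i).eval t) := by
    intro t
    simp [hF, hQ, eval_finset_sum, dotProduct, Matrix.mulVec, Finset.mul_sum]
  have hFderiv : derivative F = 2 * ∑ i, derivative (Uh i) * Q i := by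
    have h1 : derivative F = ∑ i, (derivative (Uh i) * Q i + Uh i * derivative (Q i)) := by
      rw [hF, map_sum]
      exact Finset.sum_congr rfl fun i _ => derivative_mul
    have h2 : ∑ i, Uh i * derivative (Q i) = ∑ i, derivative (Uh i) * Q i := by
      have : ∀ i, derivative (Q i) = ∑ j, C (A i j) * derivative (Uh j) := by
        intro i
        rw [hQ]
        simp only [map_sum, derivative_C_mul]
      calc ∑ i, Uh i * derivative (Q i)
          = ∑ i, ∑ j, Uh i * (C (A i j) * derivative (Uh j)) := by
            simp only [this, Finset.mul_sum]
        _ = ∑ j, ∑ i, Uh i * (C (A i j) * derivative (Uh j)) := Finset.sum_comm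
        _ = ∑ j, derivative (Uh j) * Q j := by
            apply Finset.sum_congr rfl
            intro j _
            rw [hQ, Finset.mul_sum]
            apply Finset.sum_congr rfl
            intro i _
            rw [hsym i j]
            ring
    rw [h1, Finset.sum_add_distrib, h2, two_mul]
  have hFTC : ∫ t in (0:ℝ)..k, (derivative F).eval t = F.eval k - F.eval 0 :=
    intervalIntegral.integral_eq_sub_of_hasDerivAt (fun t _ => F.hasDerivAt t)
      ((Polynomial.continuous _).intervalIntegrable _ _)
  have hdF : ∀ t, (derivative F).eval t = 2 * ∑ i, D i t * AU i t := by
    intro t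
    rw [hFderiv]
    simp only [eval_mul, eval_ofNat, eval_finset_sum]
    congr 1
    exact Finset.sum_congr rfl fun i _ => by rw [hQeval]
  -- Step C
  have stepC : 2 * (∫ t in (0:ℝ)..k, ∑ i, D i t * AU i t)
      = (fun i => (Uh i).eval k) ⬝ᵥ A.mulVec (fun i => (Uh i).eval k)
        - (fun i => (Uh i).eval 0) ⬝ᵥ A.mulVec (fun i => (Uh i).eval 0) := by
    rw [← hFeval, ← hFeval, ← hFTC]
    rw [show (fun t => (derivative F).eval t) = fun t => 2 * ∑ i, D i t * AU i t from funext hdF]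
    rw [intervalIntegral.integral_const_mul]
  -- sums of integrals
  have hIDA : (∫ t in (0:ℝ)..k, ∑ i, D i t * AU i t) = ∑ i, ∫ t in (0:ℝ)..k, D i t * AU i t :=
    intervalIntegral.integral_finset_sum fun i _ =>
      ((contD i).mul (contAU i)).intervalIntegrable _ _
  have hIDP : (∫ t in (0:ℝ)..k, ∑ i, D i t * Pf i t) = ∑ i, ∫ t in (0:ℝ)..k, D i t * Pf i t :=
    intervalIntegral.integral_finset_sum fun i _ =>
      ((contD i).mul (contP i)).intervalIntegrable _ _
  have stepB' : (∫ t in (0:ℝ)..k, ∑ i, D i t * AU i t)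
      = ∫ t in (0:ℝ)..k, ∑ i, D i t * Pf i t := by
    rw [hIDA, hIDP]
    exact Finset.sum_congr rfl fun i _ => stepB i
  -- Step A : expand g²
  have hpt : ∀ t, (∑ i, ((g i).eval t) ^ 2)
      = (∑ i, (D i t) ^ 2) + ((∑ i, (Pf i t) ^ 2) + 2 * ∑ i, D i t * Pf i t) := by
    intro t
    rw [Finset.mul_sum, ← Finset.sum_add_distrib, ← Finset.sum_add_distrib]
    apply Finset.sum_congr rfl
    intro i _
    have h := congrArg (eval t) (heq' i)
    simp only [eval_add] at h
    rw [← h]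
    simp only [hD, hPf]
    ring
  have intD2 : IntervalIntegrable (fun t => ∑ i, (D i t)^2) MeasureTheory.volume 0 k :=
    (continuous_finset_sum _ fun i _ => (contD i).pow 2).intervalIntegrable _ _
  have intP2 : IntervalIntegrable (fun t => ∑ i, (Pf i t)^2) MeasureTheory.volume 0 k :=
    (continuous_finset_sum _ fun i _ => (contP i).pow 2).intervalIntegrable _ _
  have intDP : IntervalIntegrable (fun t => 2 * ∑ i, D i t * Pf i t) MeasureTheory.volume 0 k :=
    (continuous_const.mul (continuous_finset_sum _ fun i _ => (contD i).mul (contP i))).intervalIntegrable _ _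
  have stepA : (∫ t in (0:ℝ)..k, ∑ i, ((g i).eval t) ^ 2)
      = (∫ t in (0:ℝ)..k, ∑ i, (D i t) ^ 2) + ((∫ t in (0:ℝ)..k, ∑ i, (Pf i t) ^ 2)
          + 2 * ∫ t in (0:ℝ)..k, ∑ i, D i t * Pf i t) := by
    rw [show (fun t => ∑ i, ((g i).eval t) ^ 2)
        = fun t => (∑ i, (D i t) ^ 2) + ((∑ i, (Pf i t) ^ 2) + 2 * ∑ i, D i t * Pf i t)
      from funext hpt]
    rw [intervalIntegral.integral_add intD2 (intP2.add intDP),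
        intervalIntegral.integral_add intP2 intDP,
        intervalIntegral.integral_const_mul]
  have key : 2 * (∫ t in (0:ℝ)..k, ∑ i, D i t * Pf i t)
      = (fun i => (Uh i).eval k) ⬝ᵥ A.mulVec (fun i => (Uh i).eval k)
        - (fun i => (Uh i).eval 0) ⬝ᵥ A.mulVec (fun i => (Uh i).eval 0) := by
    rw [← stepB']; exact stepC
  linarith [stepA, key]
end

section
/- (Interpolant time-derivative stability) Let 0 = τ_0 < τ_1 < ... < τ_q = 1 be fixed nodes and let ℓ̃_0, ..., ℓ̃_q be the associated Lagrange basis polynomials of degree q. There exists a constant C (depending only on q and the nodes) such that for every absolutely continuous v : [0,1] → ℝ^n with v' ∈ L²((0,1); ℝ^n), the interpolant v̂(t) = ∑_{i=0}^q ℓ̃_i(t) v(τ_i) satisfies ∫_0^1 ‖v̂'(t)‖² dt ≤ C ∫_0^1 ‖v'(t)‖² dt. -/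
open Polynomial MeasureTheory

lemma sq_intervalIntegral_le (g : ℝ → ℝ) (hg : IntervalIntegrable g volume 0 1)
    (hg2 : IntervalIntegrable (fun s => g s ^ 2) volume 0 1) {a : ℝ}
    (ha : a ∈ Set.Icc (0 : ℝ) 1) :
    (∫ s in (0:ℝ)..a, g s) ^ 2 ≤ ∫ s in (0:ℝ)..1, g s ^ 2 := by
  obtain ⟨ha0, ha1⟩ := ha
  set μ := volume.restrict (Set.Ioc (0:ℝ) 1) with hμ
  haveI : IsFiniteMeasure μ := by
    constructor
    rw [hμ, Measure.restrict_apply_univ]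
    simp [Real.volume_Ioc]
  have hga : IntervalIntegrable g volume 0 a := by
    apply hg.mono_set
    rw [Set.uIcc_of_le ha0, Set.uIcc_of_le (show (0:ℝ) ≤ 1 by norm_num)]
    exact Set.Icc_subset_Icc le_rfl ha1
  have h1 : |∫ s in (0:ℝ)..a, g s| ≤ ∫ s in (0:ℝ)..a, |g s| :=
    intervalIntegral.abs_integral_le_integral_abs ha0
  have h2 : (∫ s in (0:ℝ)..a, |g s|) ≤ ∫ s in (0:ℝ)..1, |g s| := by
    apply intervalIntegral.integral_mono_interval le_rfl ha0 ha1
    · filter_upwards with x using abs_nonneg _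
    · exact hg.abs
  have hm : AEStronglyMeasurable g μ := hg.1.aestronglyMeasurable
  have hmem : MemLp (fun x => |g x|) (ENNReal.ofReal 2) μ := by
    rw [show ENNReal.ofReal 2 = 2 by norm_num]
    rw [memLp_two_iff_integrable_sq (continuous_abs.comp_aestronglyMeasurable hm)]
    have : IntegrableOn (fun s => g s ^ 2) (Set.Ioc (0:ℝ) 1) volume := hg2.1
    simpa [sq_abs, hμ] using this.integrable
  have hmem1 : MemLp (fun _ : ℝ => (1:ℝ)) (ENNReal.ofReal 2) μ := memLp_const 1
  have h3 : (∫ x, |g x| ∂μ) ≤ (∫ x, |g x| ^ (2:ℝ) ∂μ) ^ ((1:ℝ)/2) * (∫ x, (1:ℝ) ^ (2:ℝ) ∂μ) ^ ((1:ℝ)/2) := by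
    have := integral_mul_le_Lp_mul_Lq_of_nonneg (μ := μ)
      (Real.holderConjugate_iff.mpr ⟨by norm_num, by norm_num⟩ : Real.HolderConjugate 2 2) (f := fun x => |g x|) (g := fun _ => (1:ℝ))
      (Filter.Eventually.of_forall fun x => abs_nonneg _)
      (Filter.Eventually.of_forall fun x => zero_le_one) hmem hmem1
    simpa using this
  have hμuniv : (μ Set.univ).toReal = 1 := by
    rw [hμ, Measure.restrict_apply_univ]; simp [Real.volume_Ioc]
  have h4 : (∫ x, (1:ℝ) ^ (2:ℝ) ∂μ) = 1 := by
    simp [Measure.real, hμuniv]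
  have h5 : (∫ x, |g x| ^ (2:ℝ) ∂μ) = ∫ s in (0:ℝ)..1, g s ^ 2 := by
    rw [intervalIntegral.integral_of_le (by norm_num : (0:ℝ) ≤ 1)]
    apply integral_congr_ae
    filter_upwards with x
    rw [show ((2:ℝ)) = ((2:ℕ):ℝ) by norm_num, Real.rpow_natCast, sq_abs]
  have hI2 : (0:ℝ) ≤ ∫ s in (0:ℝ)..1, g s ^ 2 :=
    intervalIntegral.integral_nonneg (by norm_num) (fun t _ => sq_nonneg _)
  have h6 : (∫ s in (0:ℝ)..1, |g s|) ≤ (∫ s in (0:ℝ)..1, g s ^ 2) ^ ((1:ℝ)/2) := by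
    rw [intervalIntegral.integral_of_le (by norm_num : (0:ℝ) ≤ 1)]
    calc (∫ x, |g x| ∂μ) ≤ _ := h3
    _ = (∫ s in (0:ℝ)..1, g s ^ 2) ^ ((1:ℝ)/2) := by rw [h4, h5]; simp
  calc (∫ s in (0:ℝ)..a, g s) ^ 2 ≤ (∫ s in (0:ℝ)..1, |g s|) ^ 2 := by
        have : |∫ s in (0:ℝ)..a, g s| ≤ ∫ s in (0:ℝ)..1, |g s| := h1.trans h2
        calc (∫ s in (0:ℝ)..a, g s) ^ 2 = |∫ s in (0:ℝ)..a, g s| ^ 2 := (sq_abs _).symm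
        _ ≤ _ := pow_le_pow_left₀ (abs_nonneg _) this 2
  _ ≤ ((∫ s in (0:ℝ)..1, g s ^ 2) ^ ((1:ℝ)/2)) ^ 2 := by
        apply pow_le_pow_left₀ _ h6 2
        exact intervalIntegral.integral_nonneg (by norm_num) (fun t _ => abs_nonneg _)
  _ = ∫ s in (0:ℝ)..1, g s ^ 2 := by
        rw [← Real.rpow_natCast (_ ^ ((1:ℝ)/2)) 2, ← Real.rpow_mul hI2]
        norm_num

/-- Interpolant time-derivative stability: for fixed nodes `0 = τ 0 < ... < τ q = 1`
there is a constant `C` (depending only on `q` and the nodes) such that for every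
absolutely continuous `v : [0,1] → ℝ^n` with `v' ∈ L²`, the interpolant
`v̂(t) = ∑ i, ℓ̃ i (t) • v (τ i)` satisfies `∫₀¹ ‖v̂'‖² ≤ C ∫₀¹ ‖v'‖²`. -/
theorem interpolant_derivative_stability (q : ℕ) (τ : Fin (q + 1) → ℝ)
    (hτ : StrictMono τ) (h0 : τ 0 = 0) (h1 : τ (Fin.last q) = 1) :
    ∃ C : ℝ, ∀ (n : ℕ) (v v' : ℝ → (Fin n → ℝ)),
      (∀ t ∈ Set.Icc (0 : ℝ) 1, ∀ i,
        v t i = v 0 i + ∫ s in (0 : ℝ)..t, v' s i) →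
      (∀ i, IntervalIntegrable (fun s => v' s i) volume 0 1) →
      IntervalIntegrable (fun s => ∑ i, (v' s i) ^ 2) volume 0 1 →
      (∫ t in (0 : ℝ)..1, ∑ i,
          (∑ j, (Polynomial.derivative (Lagrange.basis Finset.univ τ j)).eval t
            * v (τ j) i) ^ 2)
        ≤ C * ∫ t in (0 : ℝ)..1, ∑ i, (v' t i) ^ 2 := by
  set P : Fin (q + 1) → ℝ → ℝ :=
    fun j t => (Polynomial.derivative (Lagrange.basis Finset.univ τ j)).eval t with hP
  have hsum : (∑ j, Lagrange.basis Finset.univ τ j) = 1 :=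
    Lagrange.sum_basis (Set.injOn_of_injective hτ.injective) ⟨0, Finset.mem_univ 0⟩
  have hder0 : ∀ t : ℝ, ∑ j, P j t = 0 := by
    intro t
    have hd : (∑ j, Polynomial.derivative (Lagrange.basis Finset.univ τ j)) = 0 := by
      rw [← map_sum, hsum]; simp
    calc ∑ j, P j t
        = (∑ j, Polynomial.derivative (Lagrange.basis Finset.univ τ j)).eval t := by
          rw [Polynomial.eval_finset_sum]
      _ = 0 := by rw [hd]; simp
  set F : ℝ → ℝ := fun t => ∑ j, (P j t) ^ 2 with hF
  have hFc : Continuous F :=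
    continuous_finset_sum _ fun j _ => (Polynomial.continuous _).pow 2
  obtain ⟨t₀, ht₀, hM'⟩ := isCompact_Icc.exists_isMaxOn
    (⟨0, by norm_num⟩ : (Set.Icc (0:ℝ) 1).Nonempty) hFc.continuousOn
  have hM : ∀ y ∈ Set.Icc (0:ℝ) 1, F y ≤ F t₀ := fun y hy => hM' hy
  set M : ℝ := F t₀ with hMdef
  have hM0 : 0 ≤ M := Finset.sum_nonneg fun j _ => sq_nonneg _
  refine ⟨M * (q + 1), ?_⟩
  intro n v v' hv hint hint2
  have hτmem : ∀ j, τ j ∈ Set.Icc (0:ℝ) 1 := fun j =>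
    ⟨h0 ▸ hτ.monotone (Fin.zero_le j), h1 ▸ hτ.monotone (Fin.le_last j)⟩
  set I : ℝ := ∫ t in (0:ℝ)..1, ∑ i, (v' t i) ^ 2 with hIdef
  have hI0 : 0 ≤ I := intervalIntegral.integral_nonneg (by norm_num)
    (fun t _ => Finset.sum_nonneg fun i _ => sq_nonneg _)
  have hone : ∀ i, IntervalIntegrable (fun s => v' s i ^ 2) volume 0 1 := by
    intro i
    apply hint2.mono_fun
    · have := ((hint i).aestronglyMeasurable.mul (hint i).aestronglyMeasurable)
      rw [Set.uIoc_of_le (by norm_num : (0:ℝ) ≤ 1)]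
      simpa [sq, Pi.mul_def] using this
    · filter_upwards with x
      rw [Real.norm_eq_abs, Real.norm_eq_abs, abs_of_nonneg (sq_nonneg _),
        abs_of_nonneg (Finset.sum_nonneg fun i _ => sq_nonneg _)]
      exact Finset.single_le_sum (f := fun i => v' x i ^ 2)
        (fun i _ => sq_nonneg _) (Finset.mem_univ i)
  have hswap : I = ∑ i, ∫ t in (0:ℝ)..1, v' t i ^ 2 := by
    rw [hIdef]
    exact intervalIntegral.integral_finset_sum fun i _ => hone i
  have hpt : ∀ t ∈ Set.Icc (0:ℝ) 1,
      ∑ i, (∑ j, P j t * v (τ j) i) ^ 2 ≤ M * (q + 1) * I := by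
    intro t ht
    have hb : ∀ (j : Fin (q+1)) (i : Fin n),
        v (τ j) i - v 0 i = ∫ s in (0:ℝ)..τ j, v' s i := by
      intro j i; rw [hv (τ j) (hτmem j) i]; ring
    have step1 : ∀ i, (∑ j, P j t * v (τ j) i)
        = ∑ j, P j t * (v (τ j) i - v 0 i) := by
      intro i
      simp_rw [mul_sub]
      rw [Finset.sum_sub_distrib, ← Finset.sum_mul, hder0 t]
      ring
    calc ∑ i, (∑ j, P j t * v (τ j) i) ^ 2
        = ∑ i, (∑ j, P j t * (v (τ j) i - v 0 i)) ^ 2 :=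
          Finset.sum_congr rfl fun i _ => by rw [step1 i]
      _ ≤ ∑ i, (∑ j, (P j t) ^ 2) * (∑ j, (v (τ j) i - v 0 i) ^ 2) :=
          Finset.sum_le_sum fun i _ => Finset.sum_mul_sq_le_sq_mul_sq _ _ _
      _ = (∑ j, (P j t) ^ 2) * ∑ i, ∑ j, (v (τ j) i - v 0 i) ^ 2 := by
          rw [Finset.mul_sum]
      _ ≤ M * ∑ i, ∑ j, (v (τ j) i - v 0 i) ^ 2 := by
          apply mul_le_mul_of_nonneg_right (hM t ht)
          exact Finset.sum_nonneg fun i _ => Finset.sum_nonneg fun j _ => sq_nonneg _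
      _ = M * ∑ j, ∑ i, (v (τ j) i - v 0 i) ^ 2 := by rw [Finset.sum_comm]
      _ ≤ M * ∑ (j : Fin (q+1)), I := by
          apply mul_le_mul_of_nonneg_left _ hM0
          apply Finset.sum_le_sum
          intro j _
          calc ∑ i, (v (τ j) i - v 0 i) ^ 2
              = ∑ i, (∫ s in (0:ℝ)..τ j, v' s i) ^ 2 :=
                Finset.sum_congr rfl fun i _ => by rw [hb j i]
            _ ≤ ∑ i, ∫ t in (0:ℝ)..1, v' t i ^ 2 :=
                Finset.sum_le_sum fun i _ =>
                  sq_intervalIntegral_le _ (hint i) (hone i) (hτmem j)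
            _ = I := hswap.symm
      _ = M * ((q + 1) * I) := by
          rw [Finset.sum_const, Finset.card_univ, Fintype.card_fin, nsmul_eq_mul]
          push_cast
          ring
      _ = M * (q + 1) * I := by ring
  have hcont : Continuous fun t => ∑ i, (∑ j, P j t * v (τ j) i) ^ 2 :=
    continuous_finset_sum _ fun i _ =>
      (continuous_finset_sum _ fun j _ => (Polynomial.continuous _).mul continuous_const).pow 2
  have hfin := intervalIntegral.integral_mono_on (by norm_num : (0:ℝ) ≤ 1)
    ((hcont.intervalIntegrable 0 1 : IntervalIntegrable _ volume 0 1)) (intervalIntegrable_const (μ := volume)) hpt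
  have hconst : (∫ _ in (0:ℝ)..1, M * (q + 1) * I) = M * (q + 1) * I := by
    rw [intervalIntegral.integral_const]; simp
  exact hfin.trans_eq hconst
end
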